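/- Theorem 2 (approximation guarantee of Exact-Greedy): let B > 0 be a budget and let d_1, …, d_{m+1} be distinct candidate datasets such that, writing S_i = {d_1, …, d_i} (with S_0 = ∅), each d_i maximizes the ratio (𝒟(S_{i−1} ∪ {e}) − 𝒟(S_{i−1})) / p(e) over all candidate datasets e ∉ S_{i−1}, each p(d_i) ≤ B, the greedy prefix satisfies ∑_{i=1}^{m} p(d_i) ≤ B, and d_{m+1} is the first dataset whose inclusion exceeds the budget, i.e., ∑_{i=1}^{m+1} p(d_i) > B. Let d_t be a candidate dataset with p(d_t) ≤ B maximizing 𝒟({d}) over all candidate datasets d with p(d) ≤ B. Then for every set S* of candidate datasets with total price at most B, max(𝒟(S_m), 𝒟({d_t})) ≥ ((1 − 1/e)/2) · 𝒟(S*). Hence the greedy algorithm that returns the better of the greedy set S_m and the best affordable single dataset d_t achieves an approximation ratio of (1 − 1/e)/2 for the distinctiveness maximization problem. -/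

import Mathlib

/-- The distinctiveness of a finite set `S` of candidate datasets. -/
def distinctiveness {α ι : Type*} [DecidableEq α] (f₀ : Finset α) (f : ι → Finset α)
    (S : Finset ι) : ℕ := (f₀ ∪ S.biUnion f).card

/-- Marginal gain identity: inserting `e` adds exactly `|f e \ (f₀ ∪ ⋃ T)|`. -/
lemma distinctiveness_insert {α ι : Type*} [DecidableEq α] [DecidableEq ι]
    (f₀ : Finset α) (f : ι → Finset α) (T : Finset ι) (e : ι) :
    distinctiveness f₀ f (insert e T) =
      (f e \ (f₀ ∪ T.biUnion f)).card + distinctiveness f₀ f T := by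
  simp only [distinctiveness, Finset.biUnion_insert]
  rw [Finset.card_sdiff_add_card, Finset.union_left_comm]

/-- Theorem 2 (approximation guarantee of Exact-Greedy): let `d 0, …, d m` be distinct
datasets chosen greedily by cost-effectiveness ratio (with `S_i = {d 0, …, d (i−1)}`),
each of price at most the budget `B`, with the greedy prefix `S_m` affordable
(`∑_{i<m} p(d i) ≤ B`) and `d m` the first dataset whose inclusion exceeds the budget
(`∑_{i<m+1} p(d i) > B`). Let `d_t` be an affordable dataset maximizing the singleton
distinctiveness over all affordable datasets. Then for every set `S*` of total price at
most `B`, `max(𝒟(S_m), 𝒟({d_t})) ≥ ((1 − 1/e)/2) · 𝒟(S*)`. -/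
theorem exact_greedy_approximation {α ι : Type*} [DecidableEq α] [Fintype ι] [DecidableEq ι]
    (f₀ : Finset α) (f : ι → Finset α) (p : ι → ℝ) (hp : ∀ e, 0 < p e)
    (B : ℝ) (hB : 0 < B) (m : ℕ) (d : ℕ → ι) (hinj : Set.InjOn d (Set.Iio (m + 1)))
    (hgreedy : ∀ i < m + 1, ∀ e : ι, e ∉ (Finset.range i).image d →
      ((distinctiveness f₀ f (insert e ((Finset.range i).image d)) : ℝ) -
          distinctiveness f₀ f ((Finset.range i).image d)) / p e ≤
        ((distinctiveness f₀ f (insert (d i) ((Finset.range i).image d)) : ℝ) -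
          distinctiveness f₀ f ((Finset.range i).image d)) / p (d i))
    (hple : ∀ i < m + 1, p (d i) ≤ B)
    (hprefix : ∑ i ∈ Finset.range m, p (d i) ≤ B)
    (hover : B < ∑ i ∈ Finset.range (m + 1), p (d i))
    (dt : ι) (hdt : p dt ≤ B)
    (hbest : ∀ d' : ι, p d' ≤ B →
      distinctiveness f₀ f {d'} ≤ distinctiveness f₀ f {dt})
    (Sstar : Finset ι) (hfeas : ∑ e ∈ Sstar, p e ≤ B) :
    max (distinctiveness f₀ f ((Finset.range m).image d) : ℝ)
        (distinctiveness f₀ f {dt} : ℝ) ≥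
      ((1 - 1 / Real.exp 1) / 2) * (distinctiveness f₀ f Sstar : ℝ) := by
  classical
  set Si : ℕ → Finset ι := fun i => (Finset.range i).image d with hSi
  set A : ℕ → Finset α := fun i => f₀ ∪ (Si i).biUnion f with hA
  have hf₀A : ∀ i, f₀ ⊆ A i := fun i => Finset.subset_union_left
  set G : ℝ := (distinctiveness f₀ f Sstar : ℝ) with hG
  have hGnn : (0:ℝ) ≤ G := Nat.cast_nonneg _
  set δ : ℕ → ℝ := fun i => ((f (d i) \ A i).card : ℝ) with hδ
  have hδnn : ∀ i, 0 ≤ δ i := fun i => Nat.cast_nonneg _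
  set gR : ℕ → ℝ := fun i => (distinctiveness f₀ f (Si i) : ℝ) with hgR
  have hgnn : ∀ i, 0 ≤ gR i := fun i => Nat.cast_nonneg _
  have hSsucc : ∀ i, Si (i+1) = insert (d i) (Si i) := by
    intro i
    simp [hSi, Finset.range_add_one]
  have hsucc : ∀ i, gR (i+1) = gR i + δ i := by
    intro i
    simp only [hgR, hSsucc i, distinctiveness_insert]
    push_cast
    ring
  have hmargcast : ∀ (e : ι) (i : ℕ),
      (distinctiveness f₀ f (insert e (Si i)) : ℝ) - distinctiveness f₀ f (Si i)
        = ((f e \ A i).card : ℝ) := by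
    intro e i
    rw [distinctiveness_insert]
    push_cast
    ring
  -- key per-step inequality
  have hkey : ∀ i < m + 1, G - gR i ≤ (B / p (d i)) * δ i := by
    intro i hi
    have hcov1 : (distinctiveness f₀ f Sstar : ℕ) ≤ (A i ∪ Sstar.biUnion f).card :=
      Finset.card_le_card (Finset.union_subset_union (hf₀A i) (Finset.Subset.refl _))
    have hcov2 : (A i ∪ Sstar.biUnion f).card
        ≤ (A i).card + ∑ e ∈ Sstar, (f e \ A i).card := by
      have h1 : A i ∪ Sstar.biUnion f = (Sstar.biUnion f \ A i) ∪ A i := by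
        rw [Finset.sdiff_union_self_eq_union, Finset.union_comm]
      have h2 : Sstar.biUnion f \ A i ⊆ Sstar.biUnion (fun e => f e \ A i) := by
        intro x hx
        simp only [Finset.mem_sdiff, Finset.mem_biUnion] at hx ⊢
        obtain ⟨⟨e, he, hxe⟩, hxA⟩ := hx
        exact ⟨e, he, by simp [hxe, hxA]⟩
      calc (A i ∪ Sstar.biUnion f).card = (Sstar.biUnion f \ A i).card + (A i).card := by
            rw [h1, Finset.card_union_of_disjoint (Finset.sdiff_disjoint)]
        _ ≤ (∑ e ∈ Sstar, (f e \ A i).card) + (A i).card :=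
            Nat.add_le_add_right (le_trans (Finset.card_le_card h2) (Finset.card_biUnion_le)) _
        _ = (A i).card + ∑ e ∈ Sstar, (f e \ A i).card := by ring
    have hterm : ∀ e ∈ Sstar, ((f e \ A i).card : ℝ) ≤ p e * (δ i / p (d i)) := by
      intro e _
      by_cases he : e ∈ Si i
      · have hsub : f e ⊆ A i :=
          le_trans (Finset.subset_biUnion_of_mem f he) Finset.subset_union_right
        have : f e \ A i = ∅ := Finset.sdiff_eq_empty_iff_subset.mpr hsub
        rw [this]
        simp only [Finset.card_empty, Nat.cast_zero]
        exact mul_nonneg (hp e).le (div_nonneg (hδnn i) (hp (d i)).le)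
      · have h := hgreedy i hi e he
        rw [hmargcast e i, hmargcast (d i) i] at h
        rw [div_le_div_iff₀ (hp e) (hp (d i))] at h
        rw [mul_comm, div_mul_eq_mul_div, le_div_iff₀ (hp (d i))]
        exact h
    have hsum : (∑ e ∈ Sstar, ((f e \ A i).card : ℝ)) ≤ B * (δ i / p (d i)) := by
      calc (∑ e ∈ Sstar, ((f e \ A i).card : ℝ))
          ≤ ∑ e ∈ Sstar, p e * (δ i / p (d i)) := Finset.sum_le_sum hterm
        _ = (∑ e ∈ Sstar, p e) * (δ i / p (d i)) := by rw [Finset.sum_mul]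
        _ ≤ B * (δ i / p (d i)) := by
            exact mul_le_mul_of_nonneg_right hfeas
              (div_nonneg (hδnn i) (hp (d i)).le)
    have hcov : G ≤ gR i + B * (δ i / p (d i)) := by
      have := le_trans hcov1 hcov2
      have hcast : G ≤ (A i).card + ∑ e ∈ Sstar, ((f e \ A i).card : ℝ) := by
        rw [hG]
        push_cast
        exact_mod_cast this
      have hAg : ((A i).card : ℝ) = gR i := rfl
      rw [hAg] at hcast
      linarith
    have : B * (δ i / p (d i)) = (B / p (d i)) * δ i := by ring
    linarith [hcov, this.symm.le]
  -- induction: G - gR i ≤ G * ∏_{j<i} (1 - p(d j)/B)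
  have hfac_nn : ∀ j < m + 1, (0:ℝ) ≤ 1 - p (d j) / B := by
    intro j hj
    have := hple j hj
    rw [sub_nonneg, div_le_one hB]
    exact this
  have hind : ∀ i, i ≤ m + 1 → G - gR i ≤ G * ∏ j ∈ Finset.range i, (1 - p (d j) / B) := by
    intro i
    induction i with
    | zero => intro _; simpa using sub_le_self G (hgnn 0)
    | succ i ih =>
      intro hi
      have hi' : i < m + 1 := hi
      have h1 := ih (le_of_lt hi')
      have hk := hkey i hi'
      have hpd := hp (d i)
      -- δ i ≥ (p (d i) / B) * (G - gR i)
      have hδlb : (p (d i) / B) * (G - gR i) ≤ δ i := by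
        have h2 : (p (d i) / B) * (G - gR i) ≤ (p (d i) / B) * ((B / p (d i)) * δ i) :=
          mul_le_mul_of_nonneg_left hk (by positivity)
        have h3 : (p (d i) / B) * ((B / p (d i)) * δ i) = δ i := by
          field_simp
        linarith [h2, h3.le]
      have hstep : G - gR (i+1) ≤ (G - gR i) * (1 - p (d i) / B) := by
        rw [hsucc i]
        have : (G - gR i) * (1 - p (d i) / B) = (G - gR i) - (p (d i) / B) * (G - gR i) := by
          ring
        linarith [hδlb]
      calc G - gR (i+1) ≤ (G - gR i) * (1 - p (d i) / B) := hstep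
        _ ≤ (G * ∏ j ∈ Finset.range i, (1 - p (d j) / B)) * (1 - p (d i) / B) :=
            mul_le_mul_of_nonneg_right h1 (hfac_nn i hi')
        _ = G * ∏ j ∈ Finset.range (i+1), (1 - p (d j) / B) := by
            rw [Finset.prod_range_succ]; ring
  -- the product is at most 1/e
  have hprod : ∏ j ∈ Finset.range (m+1), (1 - p (d j) / B) ≤ 1 / Real.exp 1 := by
    have h1 : ∏ j ∈ Finset.range (m+1), (1 - p (d j) / B)
        ≤ ∏ j ∈ Finset.range (m+1), Real.exp (-(p (d j) / B)) := by
      apply Finset.prod_le_prod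
      · intro j hj
        exact hfac_nn j (Finset.mem_range.mp hj)
      · intro j _
        linarith [Real.add_one_le_exp (-(p (d j) / B))]
    have h2 : ∏ j ∈ Finset.range (m+1), Real.exp (-(p (d j) / B))
        = Real.exp (∑ j ∈ Finset.range (m+1), -(p (d j) / B)) := by
      rw [Real.exp_sum]
    have h3 : (∑ j ∈ Finset.range (m+1), -(p (d j) / B)) ≤ -1 := by
      have heq : (∑ j ∈ Finset.range (m+1), -(p (d j) / B))
          = -((∑ j ∈ Finset.range (m+1), p (d j)) / B) := by
        rw [Finset.sum_div, Finset.sum_neg_distrib]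
      rw [heq, neg_le_neg_iff, le_div_iff₀ hB, one_mul]
      exact hover.le
    have h4 : Real.exp (∑ j ∈ Finset.range (m+1), -(p (d j) / B)) ≤ Real.exp (-1) :=
      Real.exp_le_exp.mpr h3
    have h5 : Real.exp (-1) = 1 / Real.exp 1 := by
      rw [Real.exp_neg, one_div]
    linarith [h1, h2.le, h4, h5.le]
  -- conclude (1 - 1/e) G ≤ gR (m+1)
  have hGm1 : (1 - 1 / Real.exp 1) * G ≤ gR (m+1) := by
    have h1 := hind (m+1) le_rfl
    have h2 : G * ∏ j ∈ Finset.range (m+1), (1 - p (d j) / B) ≤ G * (1 / Real.exp 1) :=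
      mul_le_mul_of_nonneg_left hprod hGnn
    nlinarith [h1, h2]
  -- δ m ≤ 𝒟({dt})
  have hδm : δ m ≤ (distinctiveness f₀ f {dt} : ℝ) := by
    have h1 : f (d m) \ A m ⊆ f₀ ∪ f (d m) := by
      intro x hx
      exact Finset.mem_union_right _ (Finset.mem_sdiff.mp hx).1
    have h2 : (f (d m) \ A m).card ≤ distinctiveness f₀ f {d m} := by
      unfold distinctiveness
      rw [Finset.singleton_biUnion]
      exact Finset.card_le_card h1
    have h3 : distinctiveness f₀ f {d m} ≤ distinctiveness f₀ f {dt} :=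
      hbest (d m) (hple m (Nat.lt_succ_self m))
    have h2' : ((f (d m) \ A m).card : ℝ) ≤ (distinctiveness f₀ f {d m} : ℝ) := by
      exact_mod_cast h2
    have h3' : (distinctiveness f₀ f {d m} : ℝ) ≤ (distinctiveness f₀ f {dt} : ℝ) := by
      exact_mod_cast h3
    exact le_trans h2' h3'
  have hsum : (1 - 1 / Real.exp 1) * G ≤ gR m + (distinctiveness f₀ f {dt} : ℝ) := by
    rw [hsucc m] at hGm1
    linarith [hδm]
  have hmax1 : gR m ≤ max (gR m) ((distinctiveness f₀ f {dt} : ℝ)) := le_max_left _ _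
  have hmax2 : (distinctiveness f₀ f {dt} : ℝ)
      ≤ max (gR m) ((distinctiveness f₀ f {dt} : ℝ)) := le_max_right _ _
  have : ((1 - 1 / Real.exp 1) / 2) * G ≤ max (gR m) ((distinctiveness f₀ f {dt} : ℝ)) := by
    nlinarith [hsum, hmax1, hmax2]
  exact this
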